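/- Let E = {Q ∈ ℝ^{N×n} : λ_i(Q) = 1 for all i = 1,...,min(N,n)} be the set of matrices all of whose singular values equal 1. Then the convex hull of E equals {Q ∈ ℝ^{N×n} : λ_max(Q) ≤ 1}, i.e. the closed unit ball of the operator norm. -/

import Mathlib

open Matrix

/-- The largest singular value of `Q` (its operator norm as a map between Euclidean spaces). -/
noncomputable def lambdaMax {N n : ℕ} (Q : Matrix (Fin N) (Fin n) ℝ) : ℝ :=
  ‖LinearMap.toContinuousLinearMap (Matrix.toEuclideanLin Q)‖

/-- The set of `N × n` matrices all of whose singular values equal `1`: equivalently,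
the Gram matrix corresponding to the smaller dimension is the identity. -/
def allSingularValuesOne (N n : ℕ) : Set (Matrix (Fin N) (Fin n) ℝ) :=
  {Q | Q * Qᵀ = 1 ∨ Qᵀ * Q = 1}

namespace SVHull

open Set

set_option maxHeartbeats 2000000

/-- Coercion to Euclidean space. -/
noncomputable abbrev eu {k : ℕ} (x : Fin k → ℝ) : EuclideanSpace ℝ (Fin k) :=
  (WithLp.equiv 2 _).symm x

lemma dot_eq_inner {k : ℕ} (x y : Fin k → ℝ) : x ⬝ᵥ y = inner ℝ (eu x) (eu y) := by
  change x ⬝ᵥ y = y ⬝ᵥ star x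
  rw [star_trivial, dotProduct_comm]

lemma eu_norm_sq {k : ℕ} (x : Fin k → ℝ) : ‖eu x‖ ^ 2 = x ⬝ᵥ x := by
  rw [dot_eq_inner, real_inner_self_eq_norm_sq]

lemma dot_self_nonneg {k : ℕ} (x : Fin k → ℝ) : 0 ≤ x ⬝ᵥ x := by
  rw [← eu_norm_sq]; positivity

lemma clm_apply {N n : ℕ} (Q : Matrix (Fin N) (Fin n) ℝ) (x : Fin n → ℝ) :
    (LinearMap.toContinuousLinearMap (Matrix.toEuclideanLin Q)) (eu x) = eu (Q *ᵥ x) := by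
  simp [LinearMap.coe_toContinuousLinearMap']; rfl

lemma norm_mulVec_le {N n : ℕ} (Q : Matrix (Fin N) (Fin n) ℝ) (x : Fin n → ℝ) :
    ‖eu (Q *ᵥ x)‖ ≤ lambdaMax Q * ‖eu x‖ := by
  rw [← clm_apply]
  exact (LinearMap.toContinuousLinearMap (Matrix.toEuclideanLin Q)).le_opNorm _

lemma lambdaMax_nonneg {N n : ℕ} (Q : Matrix (Fin N) (Fin n) ℝ) : 0 ≤ lambdaMax Q :=
  norm_nonneg _

lemma lambdaMax_le_one_iff {N n : ℕ} (Q : Matrix (Fin N) (Fin n) ℝ) :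
    lambdaMax Q ≤ 1 ↔ ∀ x : Fin n → ℝ, (Q *ᵥ x) ⬝ᵥ (Q *ᵥ x) ≤ x ⬝ᵥ x := by
  constructor
  · intro h x
    rw [← eu_norm_sq, ← eu_norm_sq]
    have h1 := norm_mulVec_le Q x
    have h2 : lambdaMax Q * ‖eu x‖ ≤ 1 * ‖eu x‖ :=
      mul_le_mul_of_nonneg_right h (norm_nonneg _)
    rw [one_mul] at h2
    exact pow_le_pow_left₀ (norm_nonneg _) (h1.trans h2) 2
  · intro h
    apply ContinuousLinearMap.opNorm_le_bound _ zero_le_one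
    intro y
    rw [one_mul]
    have hy : y = eu ((WithLp.equiv 2 _) y) := rfl
    rw [hy, clm_apply]
    have := h ((WithLp.equiv 2 _) y)
    rw [← eu_norm_sq, ← eu_norm_sq] at this
    exact (pow_le_pow_iff_left₀ (norm_nonneg _) (norm_nonneg _) two_ne_zero).mp this


-- quadratic form of Qᵀ * Q
lemma dot_gram {N n : ℕ} (Q : Matrix (Fin N) (Fin n) ℝ) (x : Fin n → ℝ) :
    x ⬝ᵥ ((Qᵀ * Q) *ᵥ x) = (Q *ᵥ x) ⬝ᵥ (Q *ᵥ x) := by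
  rw [← mulVec_mulVec, dotProduct_mulVec, vecMul_transpose]

lemma lambdaMax_le_one_iff_posSemidef {N n : ℕ} (Q : Matrix (Fin N) (Fin n) ℝ) :
    lambdaMax Q ≤ 1 ↔ (1 - Qᵀ * Q).PosSemidef := by
  rw [lambdaMax_le_one_iff]
  constructor
  · intro h
    refine Matrix.PosSemidef.of_dotProduct_mulVec_nonneg ?_ ?_
    · have : (Qᵀ * Q).IsHermitian := by
        have := posSemidef_conjTranspose_mul_self Q
        rw [conjTranspose_eq_transpose_of_trivial] at this
        exact this.1
      exact (isHermitian_one.sub this)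
    · intro x
      rw [star_trivial, sub_mulVec, one_mulVec, dotProduct_sub, sub_nonneg, dot_gram]
      exact h x
  · intro h x
    have := h.dotProduct_mulVec_nonneg x
    rw [star_trivial, sub_mulVec, one_mulVec, dotProduct_sub, sub_nonneg, dot_gram] at this
    exact this

lemma norm_le_of_dot {k l : ℕ} {x : Fin k → ℝ} {y : Fin l → ℝ} (h : x ⬝ᵥ x ≤ y ⬝ᵥ y) : ‖eu x‖ ≤ ‖eu y‖ := by
  rw [← eu_norm_sq, ← eu_norm_sq] at h
  exact (pow_le_pow_iff_left₀ (norm_nonneg _) (norm_nonneg _) two_ne_zero).mp h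

set_option maxHeartbeats 1000000 in
lemma lambdaMax_transpose_le {N n : ℕ} {Q : Matrix (Fin N) (Fin n) ℝ}
    (h : lambdaMax Q ≤ 1) : lambdaMax Qᵀ ≤ 1 := by
  rw [lambdaMax_le_one_iff] at h ⊢
  intro u
  set z : Fin n → ℝ := Qᵀ *ᵥ u with hz
  have key : u ⬝ᵥ (Q *ᵥ z) = z ⬝ᵥ z := by
    rw [dotProduct_mulVec, ← mulVec_transpose, ← hz]
  have h1 : u ⬝ᵥ (Q *ᵥ z) ≤ ‖eu u‖ * ‖eu (Q *ᵥ z)‖ := by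
    rw [dot_eq_inner]; exact real_inner_le_norm _ _
  have h2 : ‖eu (Q *ᵥ z)‖ ≤ ‖eu z‖ := norm_le_of_dot (h z)
  have h3 : ‖eu z‖ ^ 2 ≤ ‖eu u‖ * ‖eu z‖ := by
    rw [eu_norm_sq, ← key]
    exact h1.trans (mul_le_mul_of_nonneg_left h2 (norm_nonneg _))
  have h4 : ‖eu z‖ ≤ ‖eu u‖ := by
    rcases eq_or_lt_of_le (norm_nonneg (eu z)) with hz0 | hz0
    · rw [← hz0]; exact norm_nonneg _
    · have := h3
      rw [pow_two] at this
      exact le_of_mul_le_mul_right (by linarith [mul_comm ‖eu u‖ ‖eu z‖]) hz0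
  calc z ⬝ᵥ z = ‖eu z‖ ^ 2 := (eu_norm_sq z).symm
    _ ≤ ‖eu u‖ ^ 2 := pow_le_pow_left₀ (norm_nonneg _) h4 2
    _ = u ⬝ᵥ u := eu_norm_sq u

lemma lambdaMax_le_one_iff_posSemidef' {N n : ℕ} (Q : Matrix (Fin N) (Fin n) ℝ) :
    lambdaMax Q ≤ 1 ↔ (1 - Q * Qᵀ).PosSemidef := by
  constructor
  · intro h
    have := lambdaMax_transpose_le h
    rw [lambdaMax_le_one_iff_posSemidef, transpose_transpose] at this
    exact this
  · intro h
    have : lambdaMax Qᵀ ≤ 1 := by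
      rw [lambdaMax_le_one_iff_posSemidef, transpose_transpose]; exact h
    have := lambdaMax_transpose_le this
    rwa [transpose_transpose] at this

-- quadratic form bound by lambdaMax
lemma quad_le {k : ℕ} (F : Matrix (Fin k) (Fin k) ℝ) (x : Fin k → ℝ) :
    x ⬝ᵥ (F *ᵥ x) ≤ lambdaMax F * (x ⬝ᵥ x) := by
  have h1 : x ⬝ᵥ (F *ᵥ x) ≤ ‖eu x‖ * ‖eu (F *ᵥ x)‖ := by
    rw [dot_eq_inner]; exact real_inner_le_norm _ _
  have h2 := norm_mulVec_le F x
  calc x ⬝ᵥ (F *ᵥ x) ≤ ‖eu x‖ * ‖eu (F *ᵥ x)‖ := h1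
    _ ≤ ‖eu x‖ * (lambdaMax F * ‖eu x‖) := by
        exact mul_le_mul_of_nonneg_left h2 (norm_nonneg _)
    _ = lambdaMax F * ‖eu x‖ ^ 2 := by ring
    _ = lambdaMax F * (x ⬝ᵥ x) := by rw [eu_norm_sq]

lemma exists_mulVec_ne_zero {k l : ℕ} {M : Matrix (Fin k) (Fin l) ℝ} (h : M ≠ 0) :
    ∃ u, M *ᵥ u ≠ 0 := by
  by_contra hc
  push_neg at hc
  apply h
  ext i j
  have := congrFun (hc (Pi.single j 1)) i
  rw [mulVec_single] at this
  simpa using this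


lemma lambdaMax_neg {N n : ℕ} (Q : Matrix (Fin N) (Fin n) ℝ) :
    lambdaMax (-Q) = lambdaMax Q := by
  unfold lambdaMax
  rw [map_neg, map_neg, norm_neg]

lemma mul_vecMulVec {k l m : ℕ} (R : Matrix (Fin k) (Fin l) ℝ) (a : Fin l → ℝ)
    (b : Fin m → ℝ) : R * vecMulVec a b = vecMulVec (R *ᵥ a) b := by
  ext i j
  simp only [mul_apply, vecMulVec_apply, mulVec, dotProduct, Finset.sum_mul]
  exact Finset.sum_congr rfl (fun _ _ => by ring)

lemma vecMulVec_mul {k l m : ℕ} (a : Fin k → ℝ) (b : Fin l → ℝ)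
    (S : Matrix (Fin l) (Fin m) ℝ) : vecMulVec a b * S = vecMulVec a (Sᵀ *ᵥ b) := by
  ext i j
  simp only [mul_apply, vecMulVec_apply, mulVec, dotProduct, Finset.mul_sum, transpose_apply]
  exact Finset.sum_congr rfl (fun _ _ => by ring)

lemma key_expand {N n : ℕ} (Q D : Matrix (Fin N) (Fin n) ℝ) (t : ℝ) :
    (Q + t • D)ᵀ * (Q + t • D) =
      Qᵀ * Q + t • (Qᵀ * D + Dᵀ * Q) + (t * t) • (Dᵀ * D) := by
  simp only [transpose_add, transpose_smul, Matrix.add_mul, Matrix.mul_add,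
    Matrix.smul_mul, Matrix.mul_smul, smul_smul, smul_add]
  abel


lemma not_extreme_step {N n : ℕ} {Q : Matrix (Fin N) (Fin n) ℝ}
    (h1 : lambdaMax Q ≤ 1) (hA : Q * Qᵀ ≠ 1) (hB : Qᵀ * Q ≠ 1) :
    ∃ D : Matrix (Fin N) (Fin n) ℝ, D ≠ 0 ∧ ∃ t : ℝ, 0 < t ∧
      lambdaMax (Q + t • D) ≤ 1 ∧ lambdaMax (Q - t • D) ≤ 1 := by
  obtain ⟨B, hBdef⟩ : ∃ B, B = Qᵀ * Q := ⟨_, rfl⟩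
  obtain ⟨S, hSdef⟩ : ∃ S, S = 1 - B := ⟨_, rfl⟩
  obtain ⟨R, hRdef⟩ : ∃ R, R = (1 : Matrix (Fin N) (Fin N) ℝ) - Q * Qᵀ := ⟨_, rfl⟩
  have hSpsd : S.PosSemidef := by
    rw [hSdef, hBdef]; exact (lambdaMax_le_one_iff_posSemidef Q).mp h1
  have hRpsd : R.PosSemidef := by
    rw [hRdef]; exact (lambdaMax_le_one_iff_posSemidef' Q).mp h1
  have hSh : Sᴴ = S := hSpsd.1
  have hSt : Sᵀ = S := by rw [← conjTranspose_eq_transpose_of_trivial, hSh]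
  have hRt : Rᵀ = R := by rw [← conjTranspose_eq_transpose_of_trivial, hRpsd.1]
  have hBpsd : B.PosSemidef := by
    rw [hBdef]
    have := posSemidef_conjTranspose_mul_self Q
    rwa [conjTranspose_eq_transpose_of_trivial] at this
  have hBh : Bᴴ = B := hBpsd.1
  obtain ⟨u, hu⟩ : ∃ u, R *ᵥ u ≠ 0 := exists_mulVec_ne_zero (by
    rw [hRdef]; exact sub_ne_zero.mpr (Ne.symm hA))
  obtain ⟨v, hv⟩ : ∃ v, S *ᵥ v ≠ 0 := exists_mulVec_ne_zero (by
    rw [hSdef, hBdef]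
    exact sub_ne_zero.mpr (Ne.symm hB))
  obtain ⟨W, hWdef⟩ : ∃ W, W = vecMulVec u v := ⟨_, rfl⟩
  obtain ⟨D, hDdef⟩ : ∃ D, D = R * W * S := ⟨_, rfl⟩
  have hDform : D = vecMulVec (R *ᵥ u) (S *ᵥ v) := by
    rw [hDdef, hWdef, Matrix.mul_assoc, vecMulVec_mul, hSt, mul_vecMulVec]
  have hDne : D ≠ 0 := by
    obtain ⟨i, hi⟩ := Function.ne_iff.mp hu
    obtain ⟨j, hj⟩ := Function.ne_iff.mp hv
    intro h0
    have : D i j = 0 := by rw [h0]; rfl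
    rw [hDform, vecMulVec_apply] at this
    exact mul_ne_zero (by simpa using hi) (by simpa using hj) this
  obtain ⟨M, hMdef⟩ : ∃ M, M = Qᵀ * W := ⟨_, rfl⟩
  obtain ⟨G, hGdef⟩ : ∃ G, G = M + Mᵀ := ⟨_, rfl⟩
  obtain ⟨C, hCdef⟩ : ∃ C, C = (R * W)ᵀ * (R * W) := ⟨_, rfl⟩
  have hCpsd : C.PosSemidef := by
    rw [hCdef]
    have := posSemidef_conjTranspose_mul_self (R * W)
    rwa [conjTranspose_eq_transpose_of_trivial] at this
  have hGt : Gᵀ = G := by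
    rw [hGdef, transpose_add, transpose_transpose, add_comm]
  have hCt : Cᵀ = C := by rw [← conjTranspose_eq_transpose_of_trivial, hCpsd.1]
  obtain ⟨c1, hc1⟩ : ∃ c, c = lambdaMax G := ⟨_, rfl⟩
  obtain ⟨c2, hc2⟩ : ∃ c, c = lambdaMax C := ⟨_, rfl⟩
  have hc1n : 0 ≤ c1 := hc1 ▸ lambdaMax_nonneg _
  have hc2n : 0 ≤ c2 := hc2 ▸ lambdaMax_nonneg _
  obtain ⟨t, htdef⟩ : ∃ t : ℝ, t = 1 / (1 + c1 + c2) := ⟨_, rfl⟩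
  have hden : (0:ℝ) < 1 + c1 + c2 := by linarith
  have ht : 0 < t := by rw [htdef]; positivity
  have ht1 : t ≤ 1 := by rw [htdef, div_le_one hden]; linarith
  -- key algebraic identities
  have hcomm : Qᵀ * R = S * Qᵀ := by
    rw [hRdef, hSdef, hBdef, Matrix.mul_sub, Matrix.sub_mul, Matrix.mul_one,
      Matrix.one_mul, Matrix.mul_assoc]
  have hQD : Qᵀ * D = S * M * S := by
    rw [hDdef, ← Matrix.mul_assoc, ← Matrix.mul_assoc, hcomm, hMdef, Matrix.mul_assoc S]
  have hDQ : Dᵀ * Q = S * Mᵀ * S := by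
    have h2 : Dᵀ * Q = (Qᵀ * D)ᵀ := by rw [transpose_mul, transpose_transpose]
    rw [h2, hQD, transpose_mul, transpose_mul, hSt, Matrix.mul_assoc]
  have hDD : Dᵀ * D = S * C * S := by
    rw [hDdef, hCdef, transpose_mul, hSt, Matrix.mul_assoc,
      ← Matrix.mul_assoc (R*W)ᵀ, ← Matrix.mul_assoc, ← Matrix.mul_assoc]
  have hSsub : (S - S * S).PosSemidef := by
    have hid : S - S * S = S * B * S + B * S * B := by
      rw [hSdef]; noncomm_ring
    rw [hid]
    have p1 : (S * B * Sᴴ).PosSemidef := hBpsd.mul_mul_conjTranspose_same S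
    have p2 : (B * S * Bᴴ).PosSemidef := hSpsd.mul_mul_conjTranspose_same B
    rw [hSh] at p1; rw [hBh] at p2
    exact p1.add p2
  -- the sublemma
  have sub : ∀ τ : ℝ, |τ| ≤ t → lambdaMax (Q + τ • D) ≤ 1 := by
    intro τ hτ
    rw [lambdaMax_le_one_iff_posSemidef]
    obtain ⟨H, hHdef⟩ : ∃ H, H = τ • G + (τ * τ) • C := ⟨_, rfl⟩
    have hHt : Hᵀ = H := by
      rw [hHdef, transpose_add, transpose_smul, transpose_smul, hGt, hCt]
    have h1mH : (1 - H).PosSemidef := by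
      refine Matrix.PosSemidef.of_dotProduct_mulVec_nonneg ?_ ?_
      · show (1 - H)ᴴ = 1 - H
        rw [conjTranspose_eq_transpose_of_trivial, transpose_sub, transpose_one, hHt]
      · intro x
        rw [star_trivial, sub_mulVec, one_mulVec, dotProduct_sub, sub_nonneg]
        have hGx : x ⬝ᵥ (G *ᵥ x) ≤ c1 * (x ⬝ᵥ x) := hc1 ▸ quad_le G x
        have hGx' : -(x ⬝ᵥ (G *ᵥ x)) ≤ c1 * (x ⬝ᵥ x) := by
          have := quad_le (-G) x
          rw [lambdaMax_neg, neg_mulVec, dotProduct_neg] at this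
          exact hc1 ▸ this
        have hCx : x ⬝ᵥ (C *ᵥ x) ≤ c2 * (x ⬝ᵥ x) := hc2 ▸ quad_le C x
        have hxx : 0 ≤ x ⬝ᵥ x := dot_self_nonneg x
        have hHx : x ⬝ᵥ (H *ᵥ x) = τ * (x ⬝ᵥ (G *ᵥ x)) + (τ * τ) * (x ⬝ᵥ (C *ᵥ x)) := by
          rw [hHdef, add_mulVec, smul_mulVec, smul_mulVec, dotProduct_add,
            dotProduct_smul, dotProduct_smul, smul_eq_mul, smul_eq_mul]
        rw [hHx]
        have habs : τ * (x ⬝ᵥ (G *ᵥ x)) ≤ t * c1 * (x ⬝ᵥ x) := by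
          rcases le_total 0 τ with h0 | h0
          · have hstep : τ * (x ⬝ᵥ (G *ᵥ x)) ≤ τ * (c1 * (x ⬝ᵥ x)) :=
              mul_le_mul_of_nonneg_left hGx h0
            have hτt : τ ≤ t := (le_abs_self τ).trans hτ
            calc τ * (x ⬝ᵥ (G *ᵥ x)) ≤ τ * (c1 * (x ⬝ᵥ x)) := hstep
              _ ≤ t * (c1 * (x ⬝ᵥ x)) :=
                  mul_le_mul_of_nonneg_right hτt (by positivity)
              _ = t * c1 * (x ⬝ᵥ x) := by ring
          · have h0' : 0 ≤ -τ := by linarith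
            have hτt : -τ ≤ t := (neg_le_abs τ).trans hτ
            have hstep : (-τ) * (-(x ⬝ᵥ (G *ᵥ x))) ≤ (-τ) * (c1 * (x ⬝ᵥ x)) :=
              mul_le_mul_of_nonneg_left hGx' h0'
            calc τ * (x ⬝ᵥ (G *ᵥ x)) = (-τ) * (-(x ⬝ᵥ (G *ᵥ x))) := by ring
              _ ≤ (-τ) * (c1 * (x ⬝ᵥ x)) := hstep
              _ ≤ t * (c1 * (x ⬝ᵥ x)) :=
                  mul_le_mul_of_nonneg_right hτt (by positivity)
              _ = t * c1 * (x ⬝ᵥ x) := by ring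
        have hsq : τ * τ ≤ t * t := by
          nlinarith [sq_abs τ, abs_nonneg τ, hτ, ht.le]
        have hquad : (τ * τ) * (x ⬝ᵥ (C *ᵥ x)) ≤ t * t * c2 * (x ⬝ᵥ x) := by
          have h0C : 0 ≤ x ⬝ᵥ (C *ᵥ x) := by
            have := hCpsd.dotProduct_mulVec_nonneg x
            rwa [star_trivial] at this
          calc (τ * τ) * (x ⬝ᵥ (C *ᵥ x)) ≤ (t * t) * (x ⬝ᵥ (C *ᵥ x)) :=
                mul_le_mul_of_nonneg_right hsq h0C
            _ ≤ (t * t) * (c2 * (x ⬝ᵥ x)) :=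
                mul_le_mul_of_nonneg_left hCx (by positivity)
            _ = t * t * c2 * (x ⬝ᵥ x) := by ring
        have hcoef : t * c1 + t * t * c2 ≤ 1 := by
          have htt : t * (1 + c1 + c2) = 1 := by
            rw [htdef]; field_simp
          nlinarith [ht.le, ht1, hc1n, hc2n]
        calc τ * (x ⬝ᵥ (G *ᵥ x)) + (τ * τ) * (x ⬝ᵥ (C *ᵥ x))
            ≤ t * c1 * (x ⬝ᵥ x) + t * t * c2 * (x ⬝ᵥ x) := add_le_add habs hquad
          _ = (t * c1 + t * t * c2) * (x ⬝ᵥ x) := by ring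
          _ ≤ 1 * (x ⬝ᵥ x) := mul_le_mul_of_nonneg_right hcoef hxx
          _ = x ⬝ᵥ x := one_mul _
    have hexp : (Q + τ • D)ᵀ * (Q + τ • D) = B + S * H * S := by
      rw [key_expand, hQD, hDQ, hDD, ← hBdef, hHdef, hGdef]
      simp only [Matrix.mul_add, Matrix.add_mul, Matrix.mul_smul, Matrix.smul_mul, smul_add]
      abel
    have hfinal : (1 : Matrix (Fin n) (Fin n) ℝ) - (B + S * H * S)
        = (S - S * S) + S * (1 - H) * S := by
      have hBS : B = 1 - S := by rw [hSdef]; abel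
      rw [hBS]; noncomm_ring
    rw [hexp, hfinal]
    have p3 : (S * (1 - H) * Sᴴ).PosSemidef := h1mH.mul_mul_conjTranspose_same S
    rw [hSh] at p3
    exact hSsub.add p3
  refine ⟨D, hDne, t, ht, sub t (by rw [abs_of_pos ht]), ?_⟩
  have := sub (-t) (by rw [abs_neg, abs_of_pos ht])
  rwa [neg_smul, ← sub_eq_add_neg] at this


variable {V : Type*} [NormedAddCommGroup V] [NormedSpace ℝ V] [FiniteDimensional ℝ V]

theorem isCompact_convexHull_of_isCompact {s : Set V} (hs : IsCompact s) :
    IsCompact (convexHull ℝ s) := by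
  rcases s.eq_empty_or_nonempty with rfl | ⟨z, hz⟩
  · simp
  set d := Module.finrank ℝ V + 1 with hd
  set T : (Fin d → ℝ) × (Fin d → V) → V := fun p => ∑ i, p.1 i • p.2 i with hT
  have hTcont : Continuous T := by
    apply continuous_finset_sum
    intro i _
    exact ((continuous_apply i).comp continuous_fst).smul
      ((continuous_apply i).comp continuous_snd)
  have hK : IsCompact ((stdSimplex ℝ (Fin d)) ×ˢ (Set.univ.pi fun _ : Fin d => s)) :=
    IsCompact.prod (isCompact_stdSimplex _ _) (isCompact_univ_pi fun _ => hs)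
  have himg : convexHull ℝ s = T '' ((stdSimplex ℝ (Fin d)) ×ˢ (Set.univ.pi fun _ => s)) := by
    apply Set.Subset.antisymm
    · intro x hx
      rw [convexHull_eq_union] at hx
      obtain ⟨t, ht⟩ := Set.mem_iUnion.mp hx
      obtain ⟨hts, ht2⟩ := Set.mem_iUnion.mp ht
      obtain ⟨hai, hxt⟩ := Set.mem_iUnion.mp ht2
      have hcard : t.card ≤ d := by
        have h1 := hai.card_le_finrank_succ
        have h2 : Module.finrank ℝ (vectorSpan ℝ (Set.range ((↑) : t → V))) ≤
            Module.finrank ℝ V := Submodule.finrank_le _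
        rw [hd]
        calc t.card = Fintype.card t := (Fintype.card_coe t).symm
          _ ≤ _ := h1
          _ ≤ Module.finrank ℝ V + 1 := by omega
      rw [Finset.convexHull_eq] at hxt
      obtain ⟨w, hw0, hw1, hwx⟩ := hxt
      -- enumerate t
      have hEq : ∀ i : Fin t.card, ((t.equivFin.symm i : V) ∈ t) := fun i => (t.equivFin.symm i).2
      set e : Fin t.card → V := fun i => (t.equivFin.symm i : V) with he
      set F : (V → ℝ) → ℕ → ℝ :=
        fun f i => if h : i < t.card then f (e ⟨i, h⟩) else 0 with hF
      have hsum_eq : ∀ f : V → ℝ, ∑ i : Fin d, F f (i : ℕ) = ∑ y ∈ t, f y := by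
        intro f
        rw [Fin.sum_univ_eq_sum_range (F f) d]
        rw [← Finset.sum_subset (Finset.range_subset_range.mpr hcard)
          (fun i _ hi => by rw [Finset.mem_range] at hi; simp [hF, hi])]
        rw [← Fin.sum_univ_eq_sum_range (F f) t.card]
        have h4 : ∑ i : Fin t.card, F f (i : ℕ) = ∑ i : Fin t.card, f (e i) := by
          apply Finset.sum_congr rfl
          intro i _
          rw [hF]
          dsimp only
          rw [dif_pos i.isLt]
        rw [h4]
        exact (Equiv.sum_comp t.equivFin.symm (fun a : {x // x ∈ t} => f (a : V))).trans
          (Finset.sum_coe_sort t f)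
      set ω : Fin d → ℝ := fun i => F w (i : ℕ) with hω
      set g : Fin d → V := fun i => if h : (i : ℕ) < t.card then e ⟨i, h⟩ else z with hg
      refine ⟨(ω, g), ⟨?_, ?_⟩, ?_⟩
      · constructor
        · intro i
          rw [hω, hF]
          dsimp only
          split
          · next h => exact hw0 _ (by simpa [he] using hEq ⟨i, h⟩)
          · exact le_refl 0
        · rw [hω]
          exact (hsum_eq w).trans hw1
      · intro i _
        rw [hg]
        dsimp only
        split
        · next h => exact hts (hEq ⟨i, h⟩)
        · exact hz
      · rw [hT]
        dsimp only
        have hWG : ∀ f : V → V, ∑ i : Fin d,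
            (if h : (i:ℕ) < t.card then f (e ⟨i, h⟩) else 0) = ∑ y ∈ t, f y := by
          intro f
          rw [Fin.sum_univ_eq_sum_range (fun i => if h : i < t.card then f (e ⟨i, h⟩) else 0) d]
          rw [← Finset.sum_subset (Finset.range_subset_range.mpr hcard)
            (fun i _ hi => by rw [Finset.mem_range] at hi; simp [hi])]
          rw [← Fin.sum_univ_eq_sum_range (fun i => if h : i < t.card then f (e ⟨i, h⟩) else 0) t.card]
          have h4 : (∑ i : Fin t.card, if h : (i:ℕ) < t.card then f (e ⟨i, h⟩) else 0)
              = ∑ i : Fin t.card, f (e i) := by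
            apply Finset.sum_congr rfl
            intro i _
            rw [dif_pos i.isLt]
          rw [h4]
          exact (Equiv.sum_comp t.equivFin.symm (fun a : {x // x ∈ t} => f (a : V))).trans
            (Finset.sum_coe_sort t f)
        have hstep : ∑ i : Fin d, ω i • g i
            = ∑ i : Fin d, (if h : (i : ℕ) < t.card then (fun y => w y • y) (e ⟨i, h⟩) else 0) := by
          apply Finset.sum_congr rfl
          intro i _
          rw [hω, hg, hF]
          dsimp only
          split
          · rfl
          · rw [zero_smul]
        rw [hstep, hWG (fun y => w y • y)]
        rw [Finset.centerMass_eq_of_sum_1 _ id hw1] at hwx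
        simpa using hwx
    · rintro x ⟨⟨ωp, gp⟩, ⟨⟨hω0, hω1⟩, hgs⟩, rfl⟩
      apply (convex_convexHull ℝ s).sum_mem (fun i _ => hω0 i) hω1
      intro i _
      exact subset_convexHull ℝ s (hgs i (Set.mem_univ i))
  rw [himg]
  exact hK.image hTcont


section Assembly

attribute [local instance] Matrix.normedAddCommGroup Matrix.normedSpace

variable {N n : ℕ}

/-- `lambdaMax` as norm of a linear map. -/
noncomputable def phi (N n : ℕ) :
    Matrix (Fin N) (Fin n) ℝ →ₗ[ℝ] (EuclideanSpace ℝ (Fin n) →L[ℝ] EuclideanSpace ℝ (Fin N)) :=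
  (LinearMap.toContinuousLinearMap.toLinearMap).comp (Matrix.toEuclideanLin.toLinearMap)

lemma lambdaMax_eq_phi (Q : Matrix (Fin N) (Fin n) ℝ) : lambdaMax Q = ‖phi N n Q‖ := rfl

lemma convex_ball : Convex ℝ {Q : Matrix (Fin N) (Fin n) ℝ | lambdaMax Q ≤ 1} := by
  intro x hx y hy a b ha hb hab
  simp only [Set.mem_setOf_eq, lambdaMax_eq_phi] at *
  rw [map_add, _root_.map_smul, _root_.map_smul]
  calc ‖a • phi N n x + b • phi N n y‖ ≤ ‖a • phi N n x‖ + ‖b • phi N n y‖ := norm_add_le _ _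
    _ = a * ‖phi N n x‖ + b * ‖phi N n y‖ := by
        rw [norm_smul a ((phi N n) x), norm_smul b ((phi N n) y), Real.norm_eq_abs,
          Real.norm_eq_abs, abs_of_nonneg ha, abs_of_nonneg hb]
    _ ≤ a * 1 + b * 1 := by
        apply add_le_add (mul_le_mul_of_nonneg_left hx ha) (mul_le_mul_of_nonneg_left hy hb)
    _ = 1 := by linarith

lemma continuous_lambdaMax : Continuous (fun Q : Matrix (Fin N) (Fin n) ℝ => lambdaMax Q) := by
  simp only [lambdaMax_eq_phi]
  exact continuous_norm.comp (phi N n).continuous_of_finiteDimensional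

lemma closed_ball' : IsClosed {Q : Matrix (Fin N) (Fin n) ℝ | lambdaMax Q ≤ 1} :=
  isClosed_le continuous_lambdaMax continuous_const

lemma entry_abs_le (Q : Matrix (Fin N) (Fin n) ℝ) (i : Fin N) (j : Fin n) :
    |Q i j| ≤ lambdaMax Q := by
  have h1 : Q *ᵥ Pi.single j 1 = fun i => Q i j := by
    rw [mulVec_single]; simp; rfl
  have h2 : ‖eu (Pi.single j (1:ℝ))‖ = 1 := by
    have : eu (Pi.single j (1:ℝ)) = EuclideanSpace.single j (1:ℝ) := rfl
    rw [this, EuclideanSpace.norm_single, norm_one]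
  have h3 := norm_mulVec_le Q (Pi.single j 1)
  rw [h2, mul_one] at h3
  have h4 : |Q i j| ≤ ‖eu (Q *ᵥ Pi.single j 1)‖ := by
    rw [EuclideanSpace.norm_eq]
    have h5 : |Q i j| = Real.sqrt (‖(Q *ᵥ Pi.single j 1) i‖ ^ 2) := by
      rw [h1, Real.norm_eq_abs, Real.sqrt_sq_eq_abs, abs_abs]
    rw [h5]
    apply Real.sqrt_le_sqrt
    exact Finset.single_le_sum (f := fun k => ‖(Q *ᵥ Pi.single j 1) k‖ ^ 2)
      (fun k _ => by positivity) (Finset.mem_univ i)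
  exact h4.trans h3

lemma bounded_ball : Bornology.IsBounded {Q : Matrix (Fin N) (Fin n) ℝ | lambdaMax Q ≤ 1} := by
  apply Bornology.IsBounded.subset (Metric.isBounded_closedBall (x := (0 : Matrix (Fin N) (Fin n) ℝ)) (r := 1))
  intro Q hQ
  rw [Metric.mem_closedBall, dist_zero_right]
  rw [Matrix.norm_le_iff zero_le_one]
  intro i j
  exact (entry_abs_le Q i j).trans hQ

lemma compact_ball : IsCompact {Q : Matrix (Fin N) (Fin n) ℝ | lambdaMax Q ≤ 1} :=
  Metric.isCompact_of_isClosed_isBounded closed_ball' bounded_ball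

lemma E_subset_ball : allSingularValuesOne N n ⊆ {Q : Matrix (Fin N) (Fin n) ℝ | lambdaMax Q ≤ 1} := by
  rintro Q (h | h)
  · rw [Set.mem_setOf_eq, lambdaMax_le_one_iff_posSemidef', h, sub_self]
    exact Matrix.PosSemidef.zero
  · rw [Set.mem_setOf_eq, lambdaMax_le_one_iff_posSemidef, h, sub_self]
    exact Matrix.PosSemidef.zero

lemma E_closed : IsClosed (allSingularValuesOne N n) := by
  have h1 : Continuous (fun Q : Matrix (Fin N) (Fin n) ℝ => Q * Qᵀ) :=
    (continuous_id.matrix_mul continuous_id.matrix_transpose)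
  have h2 : Continuous (fun Q : Matrix (Fin N) (Fin n) ℝ => Qᵀ * Q) :=
    (continuous_id.matrix_transpose.matrix_mul continuous_id)
  have : allSingularValuesOne N n =
      (fun Q : Matrix (Fin N) (Fin n) ℝ => Q * Qᵀ) ⁻¹' {1} ∪
      (fun Q : Matrix (Fin N) (Fin n) ℝ => Qᵀ * Q) ⁻¹' {1} := by
    ext Q; simp [allSingularValuesOne]
  rw [this]
  exact ((isClosed_singleton.preimage h1).union (isClosed_singleton.preimage h2))

lemma E_compact : IsCompact (allSingularValuesOne N n) :=
  Metric.isCompact_of_isClosed_isBounded E_closed (bounded_ball.subset E_subset_ball)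

lemma extreme_subset :
    Set.extremePoints ℝ {Q : Matrix (Fin N) (Fin n) ℝ | lambdaMax Q ≤ 1} ⊆
      allSingularValuesOne N n := by
  intro Q hQ
  rw [mem_extremePoints] at hQ
  obtain ⟨hQ1, hQ2⟩ := hQ
  by_contra hE
  rw [allSingularValuesOne, Set.mem_setOf_eq, not_or] at hE
  obtain ⟨D, hDne, t, ht, hp, hm⟩ := not_extreme_step hQ1 hE.1 hE.2
  have hseg : Q ∈ openSegment ℝ (Q + t • D) (Q - t • D) := by
    refine ⟨1/2, 1/2, by norm_num, by norm_num, by norm_num, ?_⟩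
    module
  have := (hQ2 (Q + t • D) hp (Q - t • D) hm hseg).1
  have h0 : t • D = 0 := by
    have := congrArg (fun X => X - Q) this
    simpa using this
  rcases smul_eq_zero.mp h0 with h | h
  · exact absurd h (ne_of_gt ht)
  · exact hDne h


theorem main (N n : ℕ) :
    convexHull ℝ (allSingularValuesOne N n) =
      {Q : Matrix (Fin N) (Fin n) ℝ | lambdaMax Q ≤ 1} := by
  haveI : LocallyConvexSpace ℝ (Matrix (Fin N) (Fin n) ℝ) := NormedSpace.toLocallyConvexSpace
  apply Set.Subset.antisymm
  · exact convexHull_min E_subset_ball convex_ball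
  · have h1 : closure (convexHull ℝ
        (Set.extremePoints ℝ {Q : Matrix (Fin N) (Fin n) ℝ | lambdaMax Q ≤ 1}))
        = {Q : Matrix (Fin N) (Fin n) ℝ | lambdaMax Q ≤ 1} :=
      closure_convexHull_extremePoints compact_ball convex_ball
    rw [← h1]
    have h2 : closure (convexHull ℝ
        (Set.extremePoints ℝ {Q : Matrix (Fin N) (Fin n) ℝ | lambdaMax Q ≤ 1}))
        ⊆ closure (convexHull ℝ (allSingularValuesOne N n)) :=
      closure_mono (convexHull_mono extreme_subset)
    have h3 : closure (convexHull ℝ (allSingularValuesOne N n))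
        = convexHull ℝ (allSingularValuesOne N n) :=
      (isCompact_convexHull_of_isCompact E_compact).isClosed.closure_eq
    rw [← h3]
    exact h2

end Assembly

end SVHull

/-- The convex hull of the set of matrices all of whose singular values equal `1` is the
closed unit ball of the operator norm, `{Q : λ_max(Q) ≤ 1}`. -/
theorem convexHull_allSingularValuesOne (N n : ℕ) :
    convexHull ℝ (allSingularValuesOne N n) =
      {Q : Matrix (Fin N) (Fin n) ℝ | lambdaMax Q ≤ 1} :=
  SVHull.main N n
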